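/- Let H be a connected simple graph with minimum degree at least 2 satisfying γ_dR(H) ≤ 12·n(H)/11, and let u ∈ V(H). If G is the graph obtained from the disjoint union of H and C_{m,k}, for integers m ≥ 3 and k ≥ 1 other than the cases m = 5 with k ∈ {2,3,5} and m = 7 with k = 3, by adding the edge u y_k, then γ_dR(G) ≤ 12·n(G)/11. -/
import Mathlib


/-- A double Roman dominating function on a simple graph `G`:
values in `{0,1,2,3}`, every vertex with value `0` has two neighbors with value `2`
or one neighbor with value `3`, and every vertex with value `1` has a neighbor with
value at least `2`. -/
def IsDRDF {V : Type*} (G : SimpleGraph V) (f : V → ℕ) : Prop :=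
  (∀ v, f v ≤ 3) ∧
  (∀ v, f v = 0 →
    (∃ u w, u ≠ w ∧ G.Adj v u ∧ G.Adj v w ∧ f u = 2 ∧ f w = 2) ∨ ∃ u, G.Adj v u ∧ f u = 3) ∧
  (∀ v, f v = 1 → ∃ u, G.Adj v u ∧ 2 ≤ f u)

/-- The double Roman domination number: the minimum weight of a DRDF. -/
noncomputable def gammaDR {V : Type*} [Fintype V] (G : SimpleGraph V) : ℕ :=
  sInf {w | ∃ f, IsDRDF G f ∧ ∑ v, f v = w}

/-- Base relation for the graph `C_{m,k}`: a cycle `x_1 ⋯ x_m x_1` (here `Fin m`, with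
`x_1` being `0`), a path `y_1 ⋯ y_k` (here `Fin k`, with `y_1` being `0` and `y_k` being
`k-1`), together with the edge `x_1 y_1`. -/
def cmkR (m k : ℕ) : (Fin m ⊕ Fin k) → (Fin m ⊕ Fin k) → Prop
  | .inl u, .inl v => (u.val + 1) % m = v.val
  | .inr i, .inr j => i.val + 1 = j.val
  | .inl u, .inr j => u.val = 0 ∧ j.val = 0
  | .inr _, .inl _ => False

/-- The graph `C_{m,k}`. -/
def Cmk (m k : ℕ) : SimpleGraph (Fin m ⊕ Fin k) := SimpleGraph.fromRel (cmkR m k)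
/-- Base relation for the graph obtained from the disjoint union of `H` and `C_{m,k}`
by adding the edge joining `u ∈ V(H)` to the leaf `y_k` of `C_{m,k}`. -/
def joinLeafR {V : Type*} (H : SimpleGraph V) (u : V) (m k : ℕ) :
    (V ⊕ (Fin m ⊕ Fin k)) → (V ⊕ (Fin m ⊕ Fin k)) → Prop
  | .inl a, .inl b => H.Adj a b
  | .inr a, .inr b => cmkR m k a b
  | .inl a, .inr (.inr j) => a = u ∧ j.val + 1 = k
  | _, _ => False

/-- The graph obtained from the disjoint union of `H` and `C_{m,k}` by adding the edge
`u y_k`. -/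
def joinLeaf {V : Type*} (H : SimpleGraph V) (u : V) (m k : ℕ) :
    SimpleGraph (V ⊕ (Fin m ⊕ Fin k)) :=
  SimpleGraph.fromRel (joinLeafR H u m k)

/-! ### Auxiliary material -/

open Finset

instance cmkR.decRel (m k : ℕ) : DecidableRel (cmkR m k) := fun a b =>
  match a, b with
  | .inl u, .inl v => inferInstanceAs (Decidable ((u.val + 1) % m = v.val))
  | .inr i, .inr j => inferInstanceAs (Decidable (i.val + 1 = j.val))
  | .inl u, .inr j => inferInstanceAs (Decidable (u.val = 0 ∧ j.val = 0))
  | .inr _, .inl _ => inferInstanceAs (Decidable False)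

instance Cmk.decAdj (m k : ℕ) : DecidableRel (Cmk m k).Adj := fun a b =>
  inferInstanceAs (Decidable (a ≠ b ∧ (cmkR m k a b ∨ cmkR m k b a)))

lemma cmk_adj (m k : ℕ) (a b : Fin m ⊕ Fin k) :
    (Cmk m k).Adj a b ↔ a ≠ b ∧ (cmkR m k a b ∨ cmkR m k b a) :=
  SimpleGraph.fromRel_adj _ a b

lemma joinLeaf_adj {V : Type*} (H : SimpleGraph V) (u : V) (m k : ℕ)
    (a b : V ⊕ (Fin m ⊕ Fin k)) :
    (joinLeaf H u m k).Adj a b ↔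
      a ≠ b ∧ (joinLeafR H u m k a b ∨ joinLeafR H u m k b a) :=
  SimpleGraph.fromRel_adj _ a b

lemma isDRDF_const3 {V : Type*} (G : SimpleGraph V) : IsDRDF G (fun _ => 3) :=
  ⟨fun _ => le_rfl, fun _ h => by simp at h, fun _ h => by simp at h⟩

lemma gammaDR_spec {V : Type*} [Fintype V] (G : SimpleGraph V) :
    ∃ f, IsDRDF G f ∧ ∑ v, f v = gammaDR G := by
  have hne : {w | ∃ f, IsDRDF G f ∧ ∑ v, f v = w}.Nonempty :=
    ⟨∑ _v : V, (3 : ℕ), ⟨fun _ => 3, isDRDF_const3 G, rfl⟩⟩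
  exact Nat.sInf_mem hne

/-- Glue lemma: a DRDF of `H` of weight `γ_dR(H)` together with a DRDF of `C_{m,k}`
gives a DRDF of the join. -/
lemma gammaDR_joinLeaf_le_add {V : Type*} [Fintype V] (H : SimpleGraph V) (u : V)
    (m k : ℕ) (f : Fin m ⊕ Fin k → ℕ) (hf : IsDRDF (Cmk m k) f) :
    gammaDR (joinLeaf H u m k) ≤ gammaDR H + ∑ v, f v := by
  obtain ⟨g, hg, hgs⟩ := gammaDR_spec H
  set F : V ⊕ (Fin m ⊕ Fin k) → ℕ := Sum.elim g f with hF
  have hadjH : ∀ a b : V, H.Adj a b → (joinLeaf H u m k).Adj (.inl a) (.inl b) := by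
    intro a b hab
    rw [joinLeaf_adj]
    exact ⟨by simpa using hab.ne, Or.inl hab⟩
  have hadjC : ∀ a b : Fin m ⊕ Fin k, (Cmk m k).Adj a b →
      (joinLeaf H u m k).Adj (.inr a) (.inr b) := by
    intro a b hab
    rw [cmk_adj] at hab
    rw [joinLeaf_adj]
    exact ⟨by simpa using hab.1, hab.2⟩
  have hFd : IsDRDF (joinLeaf H u m k) F := by
    refine ⟨?_, ?_, ?_⟩
    · rintro (a | b)
      · exact hg.1 a
      · exact hf.1 b
    · rintro (a | b) h0
      · rcases hg.2.1 a h0 with ⟨p, q, hpq, h1, h2, h3, h4⟩ | ⟨p, h1, h2⟩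
        · exact Or.inl ⟨.inl p, .inl q, by simpa using hpq, hadjH _ _ h1, hadjH _ _ h2, h3, h4⟩
        · exact Or.inr ⟨.inl p, hadjH _ _ h1, h2⟩
      · rcases hf.2.1 b h0 with ⟨p, q, hpq, h1, h2, h3, h4⟩ | ⟨p, h1, h2⟩
        · exact Or.inl ⟨.inr p, .inr q, by simpa using hpq, hadjC _ _ h1, hadjC _ _ h2, h3, h4⟩
        · exact Or.inr ⟨.inr p, hadjC _ _ h1, h2⟩
    · rintro (a | b) h1
      · obtain ⟨p, hp1, hp2⟩ := hg.2.2 a h1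
        exact ⟨.inl p, hadjH _ _ hp1, hp2⟩
      · obtain ⟨p, hp1, hp2⟩ := hf.2.2 b h1
        exact ⟨.inr p, hadjC _ _ hp1, hp2⟩
  have hsum : ∑ v, F v = gammaDR H + ∑ v, f v := by
    rw [Fintype.sum_sum_type]
    simp only [hF, Sum.elim_inl, Sum.elim_inr]
    rw [hgs]
  exact Nat.sInf_le ⟨F, hFd, hsum⟩

/-- The final arithmetic step. -/
lemma final_step {V : Type*} [Fintype V] (H : SimpleGraph V)
    (hH : (gammaDR H : ℚ) ≤ 12 * (Fintype.card V) / 11)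
    (u : V) (m k : ℕ) (f : Fin m ⊕ Fin k → ℕ) (hf : IsDRDF (Cmk m k) f)
    (hw : 11 * ∑ v, f v ≤ 12 * (m + k)) :
    (gammaDR (joinLeaf H u m k) : ℚ) ≤
      12 * (Fintype.card (V ⊕ (Fin m ⊕ Fin k))) / 11 := by
  have h1 := gammaDR_joinLeaf_le_add H u m k f hf
  have hcard : ((Fintype.card (V ⊕ (Fin m ⊕ Fin k)) : ℕ) : ℚ)
      = (Fintype.card V : ℚ) + m + k := by
    simp [Fintype.card_sum]
    ring
  have h2 : (gammaDR (joinLeaf H u m k) : ℚ) ≤ (gammaDR H : ℚ) + ((∑ v, f v : ℕ) : ℚ) := by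
    exact_mod_cast h1
  have h3 : (11 : ℚ) * ((∑ v, f v : ℕ) : ℚ) ≤ 12 * ((m : ℚ) + (k : ℚ)) := by
    exact_mod_cast hw
  rw [hcard]
  have : 12 * ((Fintype.card V : ℚ) + m + k) / 11
      = 12 * (Fintype.card V : ℚ) / 11 + 12 * ((m : ℚ) + k) / 11 := by ring
  rw [this]
  linarith

/-! ### The generic DRDF on `C_{m,k}` -/

def gcyc (m i : ℕ) : ℕ :=
  if i = 0 then 3 else if i % 3 = 0 ∧ i + 2 ≤ m then 3
  else if m % 3 = 1 ∧ i + 2 = m then 2 else 0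

def gpath (k j : ℕ) : ℕ :=
  if j % 3 = 2 then 3 else if k % 3 = 2 ∧ j + 1 = k then 2 else 0

def fgen (m k : ℕ) : Fin m ⊕ Fin k → ℕ
  | .inl i => gcyc m i.val
  | .inr j => gpath k j.val

lemma fgen_isDRDF (m k : ℕ) (hm : 3 ≤ m) (hk : 1 ≤ k) :
    IsDRDF (Cmk m k) (fgen m k) := by
  have hne_inl : ∀ (a b : Fin m), a.val ≠ b.val →
      (Sum.inl a : Fin m ⊕ Fin k) ≠ Sum.inl b :=
    fun a b hab hc => hab (congrArg Fin.val (Sum.inl.inj hc))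
  have hne_inr : ∀ (a b : Fin k), a.val ≠ b.val →
      (Sum.inr a : Fin m ⊕ Fin k) ≠ Sum.inr b :=
    fun a b hab hc => hab (congrArg Fin.val (Sum.inr.inj hc))
  refine ⟨?_, ?_, ?_⟩
  · rintro (i | j)
    · show gcyc m i.val ≤ 3
      unfold gcyc; split_ifs <;> omega
    · show gpath k j.val ≤ 3
      unfold gpath; split_ifs <;> omega
  · rintro (i | j) h0
    · have him := i.isLt
      simp only [fgen, gcyc] at h0
      split_ifs at h0 with h1 h2 h3
      right
      by_cases hlast : i.val + 1 = m
      · refine ⟨Sum.inl ⟨0, by omega⟩, ?_, ?_⟩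
        · rw [cmk_adj]
          refine ⟨hne_inl _ _ (show i.val ≠ 0 from h1), Or.inl ?_⟩
          show (i.val + 1) % m = 0
          rw [hlast]
          exact Nat.mod_self m
        · show gcyc m 0 = 3
          simp [gcyc]
      · by_cases hmod0 : i.val % 3 = 0
        · exact absurd (by omega) h2
        by_cases hmod1 : i.val % 3 = 1
        · refine ⟨Sum.inl ⟨i.val - 1, by omega⟩, ?_, ?_⟩
          · rw [cmk_adj]
            refine ⟨hne_inl _ _ (show i.val ≠ i.val - 1 by omega), Or.inr ?_⟩
            show (i.val - 1 + 1) % m = i.val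
            have hh : i.val - 1 + 1 = i.val := by omega
            rw [hh, Nat.mod_eq_of_lt him]
          · show gcyc m (i.val - 1) = 3
            unfold gcyc; split_ifs <;> omega
        · -- i.val % 3 = 2
          have hmod2 : i.val % 3 = 2 := by omega
          have hlt : i.val + 2 < m := by omega
          refine ⟨Sum.inl ⟨i.val + 1, by omega⟩, ?_, ?_⟩
          · rw [cmk_adj]
            refine ⟨hne_inl _ _ (show i.val ≠ i.val + 1 by omega), Or.inl ?_⟩
            show (i.val + 1) % m = i.val + 1
            exact Nat.mod_eq_of_lt (by omega)
          · show gcyc m (i.val + 1) = 3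
            unfold gcyc; split_ifs <;> omega
    · have hjk := j.isLt
      simp only [fgen, gpath] at h0
      split_ifs at h0 with p1 p2
      right
      by_cases hj0 : j.val = 0
      · refine ⟨Sum.inl ⟨0, by omega⟩, ?_, ?_⟩
        · rw [cmk_adj]
          refine ⟨by simp, Or.inr ?_⟩
          show (0 : ℕ) = 0 ∧ j.val = 0
          exact ⟨rfl, hj0⟩
        · show gcyc m 0 = 3
          simp [gcyc]
      · by_cases hj1 : j.val % 3 = 0
        · refine ⟨Sum.inr ⟨j.val - 1, by omega⟩, ?_, ?_⟩
          · rw [cmk_adj]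
            refine ⟨hne_inr _ _ (show j.val ≠ j.val - 1 by omega), Or.inr ?_⟩
            show j.val - 1 + 1 = j.val
            omega
          · show gpath k (j.val - 1) = 3
            unfold gpath; split_ifs <;> omega
        · -- j.val % 3 = 1
          have hlt : j.val + 1 < k := by omega
          refine ⟨Sum.inr ⟨j.val + 1, by omega⟩, ?_, ?_⟩
          · rw [cmk_adj]
            refine ⟨hne_inr _ _ (show j.val ≠ j.val + 1 by omega), Or.inl ?_⟩
            show j.val + 1 = j.val + 1
            rfl
          · show gpath k (j.val + 1) = 3
            unfold gpath; split_ifs <;> omega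
  · rintro (i | j) h1
    · exfalso
      have h : gcyc m i.val = 1 := h1
      unfold gcyc at h; split_ifs at h <;> omega
    · exfalso
      have h : gpath k j.val = 1 := h1
      unfold gpath at h; split_ifs at h <;> omega

lemma Baux : ∀ n : ℕ, ∑ i ∈ range n, (if i % 3 = 0 ∧ 3 ≤ i then 3 else 0) = 3 * ((n - 1) / 3) := by
  intro n
  induction n with
  | zero => simp
  | succ n ih =>
    rw [Finset.sum_range_succ, ih]
    split_ifs <;> omega

lemma Paux : ∀ n : ℕ, ∑ j ∈ range n, (if j % 3 = 2 then 3 else 0) = 3 * (n / 3) := by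
  intro n
  induction n with
  | zero => simp
  | succ n ih =>
    rw [Finset.sum_range_succ, ih]
    split_ifs <;> omega

lemma sum_gcyc (m : ℕ) (hm : 3 ≤ m) :
    ∑ i ∈ range m, gcyc m i
      = 3 + 3 * ((m - 2) / 3) + (if m % 3 = 1 then 2 else 0) := by
  have hpt : ∀ i ∈ range m, gcyc m i
      = (if i = 0 then 3 else 0) + (if i % 3 = 0 ∧ 3 ≤ i ∧ i + 2 ≤ m then 3 else 0)
        + (if m % 3 = 1 ∧ i + 2 = m then 2 else 0) := by
    intro i _
    unfold gcyc
    split_ifs <;> omega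
  rw [Finset.sum_congr rfl hpt, Finset.sum_add_distrib, Finset.sum_add_distrib]
  have e1 : ∑ i ∈ range m, (if i = 0 then 3 else 0) = 3 := by
    rw [Finset.sum_ite_eq' (range m) 0 (fun _ => (3:ℕ))]
    exact if_pos (Finset.mem_range.mpr (by omega))
  have e2 : ∑ i ∈ range m, (if i % 3 = 0 ∧ 3 ≤ i ∧ i + 2 ≤ m then 3 else 0)
      = 3 * ((m - 2) / 3) := by
    obtain ⟨m', rfl⟩ : ∃ m', m = m' + 1 := ⟨m - 1, by omega⟩
    rw [Finset.sum_range_succ]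
    have hlast0 : (if m' % 3 = 0 ∧ 3 ≤ m' ∧ m' + 2 ≤ m' + 1 then 3 else 0) = 0 := by
      split_ifs <;> omega
    have hcg : ∀ i ∈ range m', (if i % 3 = 0 ∧ 3 ≤ i ∧ i + 2 ≤ m' + 1 then 3 else 0)
        = (if i % 3 = 0 ∧ 3 ≤ i then 3 else 0) := by
      intro i hi
      simp only [Finset.mem_range] at hi
      split_ifs <;> omega
    rw [hlast0, add_zero, Finset.sum_congr rfl hcg, Baux]
    omega
  have e3 : ∑ i ∈ range m, (if m % 3 = 1 ∧ i + 2 = m then 2 else 0)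
      = (if m % 3 = 1 then 2 else 0) := by
    by_cases hm1 : m % 3 = 1
    · have hcg : ∀ i ∈ range m, (if m % 3 = 1 ∧ i + 2 = m then 2 else 0)
          = (if i = m - 2 then 2 else 0) := by
        intro i _
        split_ifs <;> omega
      rw [Finset.sum_congr rfl hcg, Finset.sum_ite_eq' (range m) (m - 2) (fun _ => (2:ℕ)),
        if_pos (Finset.mem_range.mpr (by omega)), if_pos hm1]
    · have hcg : ∀ i ∈ range m, (if m % 3 = 1 ∧ i + 2 = m then 2 else 0) = 0 := by
        intro i _
        split_ifs <;> omega
      rw [Finset.sum_congr rfl hcg, Finset.sum_const_zero, if_neg hm1]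
  rw [e1, e2, e3]

lemma sum_gpath (k : ℕ) (hk : 1 ≤ k) :
    ∑ j ∈ range k, gpath k j = 3 * (k / 3) + (if k % 3 = 2 then 2 else 0) := by
  have hpt : ∀ j ∈ range k, gpath k j
      = (if j % 3 = 2 then 3 else 0) + (if k % 3 = 2 ∧ j + 1 = k then 2 else 0) := by
    intro j _
    unfold gpath
    split_ifs <;> omega
  rw [Finset.sum_congr rfl hpt, Finset.sum_add_distrib, Paux]
  have e2 : ∑ j ∈ range k, (if k % 3 = 2 ∧ j + 1 = k then 2 else 0)
      = (if k % 3 = 2 then 2 else 0) := by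
    by_cases hk2 : k % 3 = 2
    · have hcg : ∀ j ∈ range k, (if k % 3 = 2 ∧ j + 1 = k then 2 else 0)
          = (if j = k - 1 then 2 else 0) := by
        intro j _
        split_ifs <;> omega
      rw [Finset.sum_congr rfl hcg, Finset.sum_ite_eq' (range k) (k - 1) (fun _ => (2:ℕ)),
        if_pos (Finset.mem_range.mpr (by omega)), if_pos hk2]
    · have hcg : ∀ j ∈ range k, (if k % 3 = 2 ∧ j + 1 = k then 2 else 0) = 0 := by
        intro j _
        split_ifs <;> omega
      rw [Finset.sum_congr rfl hcg, Finset.sum_const_zero, if_neg hk2]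
  rw [e2]

lemma fgen_sum (m k : ℕ) (hm : 3 ≤ m) (hk : 1 ≤ k) :
    ∑ v, fgen m k v
      = 3 + 3 * ((m - 2) / 3) + (if m % 3 = 1 then 2 else 0)
        + (3 * (k / 3) + (if k % 3 = 2 then 2 else 0)) := by
  rw [Fintype.sum_sum_type]
  have h1 : ∑ i : Fin m, fgen m k (Sum.inl i) = ∑ i ∈ range m, gcyc m i := by
    simp only [fgen]
    exact Fin.sum_univ_eq_sum_range (fun i => gcyc m i) m
  have h2 : ∑ j : Fin k, fgen m k (Sum.inr j) = ∑ j ∈ range k, gpath k j := by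
    simp only [fgen]
    exact Fin.sum_univ_eq_sum_range (fun j => gpath k j) k
  rw [h1, h2, sum_gcyc m hm, sum_gpath k hk]

lemma exists_good (m k : ℕ) (hm : 3 ≤ m) (hk : 1 ≤ k)
    (hcond : m % 3 = 0 ∨ k % 3 = 1 ∨ 11 ≤ m + k) :
    ∃ f : Fin m ⊕ Fin k → ℕ, IsDRDF (Cmk m k) f ∧ 11 * ∑ v, f v ≤ 12 * (m + k) := by
  refine ⟨fgen m k, fgen_isDRDF m k hm hk, ?_⟩
  rw [fgen_sum m k hm hk]
  split_ifs <;> omega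

/-! ### Small cases -/

def f42 : Fin 4 ⊕ Fin 2 → ℕ := Sum.elim ![0,0,3,0] ![3,0]
def f43 : Fin 4 ⊕ Fin 3 → ℕ := Sum.elim ![2,0,2,0] ![0,3,0]
def f45 : Fin 4 ⊕ Fin 5 → ℕ := Sum.elim ![0,0,3,0] ![3,0,0,3,0]
def f46 : Fin 4 ⊕ Fin 6 → ℕ := Sum.elim ![2,0,2,0] ![0,3,0,0,3,0]
def f72 : Fin 7 ⊕ Fin 2 → ℕ := Sum.elim ![0,0,3,0,0,3,0] ![3,0]
def f82 : Fin 8 ⊕ Fin 2 → ℕ := Sum.elim ![2,0,2,0,2,0,2,0] ![0,2]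

lemma f42_d : IsDRDF (Cmk 4 2) f42 := by unfold IsDRDF; decide
lemma f43_d : IsDRDF (Cmk 4 3) f43 := by unfold IsDRDF; decide
lemma f45_d : IsDRDF (Cmk 4 5) f45 := by unfold IsDRDF; decide
lemma f46_d : IsDRDF (Cmk 4 6) f46 := by unfold IsDRDF; decide
lemma f72_d : IsDRDF (Cmk 7 2) f72 := by unfold IsDRDF; decide
lemma f82_d : IsDRDF (Cmk 8 2) f82 := by unfold IsDRDF; decide
lemma f42_w : 11 * ∑ v, f42 v ≤ 12 * (4 + 2) := by decide
lemma f43_w : 11 * ∑ v, f43 v ≤ 12 * (4 + 3) := by decide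
lemma f45_w : 11 * ∑ v, f45 v ≤ 12 * (4 + 5) := by decide
lemma f46_w : 11 * ∑ v, f46 v ≤ 12 * (4 + 6) := by decide
lemma f72_w : 11 * ∑ v, f72 v ≤ 12 * (7 + 2) := by decide
lemma f82_w : 11 * ∑ v, f82 v ≤ 12 * (8 + 2) := by decide

/-! ### Main theorem -/

/-- If `H` is a connected graph with minimum degree at least `2` satisfying
`γ_dR(H) ≤ 12 n(H) / 11`, `u ∈ V(H)`, and `G` is obtained from the disjoint union of
`H` and `C_{m,k}` (with `m ≥ 3`, `k ≥ 1` avoiding the excluded cases) by adding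
the edge `u y_k`, then `γ_dR(G) ≤ 12 n(G) / 11`. -/
theorem gammaDR_joinLeaf_le {V : Type*} [Fintype V] (H : SimpleGraph V)
    (hconn : H.Connected) (hdeg : ∀ v, 2 ≤ {w | H.Adj v w}.ncard)
    (hH : (gammaDR H : ℚ) ≤ 12 * (Fintype.card V) / 11)
    (u : V) (m k : ℕ) (hm : 3 ≤ m) (hk : 1 ≤ k)
    (h5 : ¬ (m = 5 ∧ (k = 2 ∨ k = 3 ∨ k = 5))) (h7 : ¬ (m = 7 ∧ k = 3)) :
    (gammaDR (joinLeaf H u m k) : ℚ) ≤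
      12 * (Fintype.card (V ⊕ (Fin m ⊕ Fin k))) / 11 := by
  by_cases hcond : m % 3 = 0 ∨ k % 3 = 1 ∨ 11 ≤ m + k
  · obtain ⟨f, hf, hw⟩ := exists_good m k hm hk hcond
    exact final_step H hH u m k f hf hw
  · push_neg at hcond
    obtain ⟨hc1, hc2, hc3⟩ := hcond
    have hm9 : m ≤ 9 := by omega
    have hk7 : k ≤ 7 := by omega
    interval_cases m <;> interval_cases k <;>
      first
        | omega
        | exact final_step H hH u 4 2 f42 f42_d f42_w
        | exact final_step H hH u 4 3 f43 f43_d f43_w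
        | exact final_step H hH u 4 5 f45 f45_d f45_w
        | exact final_step H hH u 4 6 f46 f46_d f46_w
        | exact final_step H hH u 7 2 f72 f72_d f72_w
        | exact final_step H hH u 8 2 f82 f82_d f82_w
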